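/- Let q ∈ ℝ and let U, V : ℝ → ℝ be twice differentiable functions satisfying U''(x) = (1 + 2q·cos(2x))·U(x) and V''(x) = (1 − 2q·cos(2x))·V(x) for all x ∈ ℝ. Define u, v : ℝ² → ℝ by u(x,y) = U(x)·cos(y) and v(x,y) = V(x)·cos(y). Then u(x,y)·Δv(x,y) + v(x,y)·Δu(x,y) = 0 for all (x,y) ∈ ℝ². Moreover, if in addition U(π/2) = U(−π/2) = V(π/2) = V(−π/2) = 0, then u and v vanish on the boundary of the square D = {(x,y) : −π/2 < x < π/2, −π/2 < y < π/2}. -/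

import Mathlib

open Real

/-- The Laplacian `Δw = ∂²w/∂x² + ∂²w/∂y²` of a function `w : ℝ² → ℝ`. -/
noncomputable def laplacian (w : ℝ × ℝ → ℝ) : ℝ × ℝ → ℝ := fun p =>
  deriv (fun x : ℝ => deriv (fun x' : ℝ => w (x', p.2)) x) p.1 +
  deriv (fun y : ℝ => deriv (fun y' : ℝ => w (p.1, y')) y) p.2

lemma lap_sep (W : ℝ → ℝ) (hW : ContDiff ℝ 2 W) (w : ℝ × ℝ → ℝ)
    (hw : ∀ x y : ℝ, w (x, y) = W x * Real.cos y) (p : ℝ × ℝ) :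
    laplacian w p = deriv (deriv W) p.1 * Real.cos p.2 - W p.1 * Real.cos p.2 := by
  have hW1 : Differentiable ℝ W := hW.differentiable (by norm_num)
  have hW2 : Differentiable ℝ (deriv W) := by
    have h := (contDiff_succ_iff_deriv.mp (by exact_mod_cast hW : ContDiff ℝ (1+1) W)).2
    exact h.2.differentiable (by norm_num)
  have e1 : (fun x' : ℝ => w (x', p.2)) = fun x' => W x' * Real.cos p.2 := by
    funext x'; exact hw x' p.2
  have e2 : (fun y' : ℝ => w (p.1, y')) = fun y' => W p.1 * Real.cos y' := by
    funext y'; exact hw p.1 y'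
  have d1 : (fun x : ℝ => deriv (fun x' : ℝ => w (x', p.2)) x)
      = fun x => deriv W x * Real.cos p.2 := by
    funext x; rw [e1, deriv_mul_const (hW1 x)]
  have d2 : (fun y : ℝ => deriv (fun y' : ℝ => w (p.1, y')) y)
      = fun y => W p.1 * (-Real.sin y) := by
    funext y; rw [e2, deriv_const_mul _ (Real.differentiable_cos y), Real.deriv_cos]
  unfold laplacian
  rw [d1, d2, deriv_mul_const (hW2 p.1)]
  have : deriv (fun y => W p.1 * (-Real.sin y)) p.2 = W p.1 * (-Real.cos p.2) := by
    rw [deriv_const_mul (d := fun y => -Real.sin y) _ ((Real.differentiable_sin p.2).neg)]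
    simp [Real.deriv_sin]
  rw [this]; ring

/-- Separated solutions built from solutions of the two Mathieu
equations satisfy `u·Δv + v·Δu = 0` on `ℝ²`, and vanish on the boundary of the
square `(−π/2, π/2) × (−π/2, π/2)` provided `U, V` vanish at `±π/2`. -/
theorem separated_mathieu_solutions
    (q : ℝ) (U V : ℝ → ℝ)
    (hU : ContDiff ℝ 2 U) (hV : ContDiff ℝ 2 V)
    (hUeq : ∀ x : ℝ, deriv (deriv U) x = (1 + 2 * q * Real.cos (2 * x)) * U x)
    (hVeq : ∀ x : ℝ, deriv (deriv V) x = (1 - 2 * q * Real.cos (2 * x)) * V x)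
    (u v : ℝ × ℝ → ℝ)
    (hu : ∀ x y : ℝ, u (x, y) = U x * Real.cos y)
    (hv : ∀ x y : ℝ, v (x, y) = V x * Real.cos y) :
    (∀ z : ℝ × ℝ, u z * laplacian v z + v z * laplacian u z = 0) ∧
    ((U (π / 2) = 0 ∧ U (-(π / 2)) = 0 ∧ V (π / 2) = 0 ∧ V (-(π / 2)) = 0) →
      ∀ z ∈ frontier ((Set.Ioo (-(π / 2)) (π / 2)) ×ˢ
          (Set.Ioo (-(π / 2)) (π / 2))), u z = 0 ∧ v z = 0) := by
  constructor
  · rintro ⟨x, y⟩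
    rw [lap_sep U hU u hu, lap_sep V hV v hv, hu, hv]
    simp only [hUeq, hVeq]
    ring
  · rintro ⟨hU1, hU2, hV1, hV2⟩ ⟨x, y⟩ hz
    have hlt : -(π / 2) < π / 2 := by
      have := Real.pi_pos; linarith
    rw [frontier_prod_eq, frontier_Ioo hlt, closure_Ioo hlt.ne] at hz
    have key : (U x = 0 ∧ V x = 0) ∨ Real.cos y = 0 := by
      rcases hz with ⟨_, hy⟩ | ⟨hx, _⟩
      · right
        simp only [Set.mem_insert_iff, Set.mem_singleton_iff] at hy
        rcases hy with h | h <;> rw [h] <;> simp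
      · left
        simp only [Set.mem_insert_iff, Set.mem_singleton_iff] at hx
        rcases hx with h | h <;> rw [h] <;> exact ⟨by assumption, by assumption⟩
    rw [hu, hv]
    rcases key with ⟨h1, h2⟩ | h
    · simp [h1, h2]
    · simp [h]
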